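/- Let C be a v×v real symmetric positive semidefinite matrix, let W be a v×v real symmetric positive semidefinite matrix of rank d with column space contained in the column space of C, and let K be a v×d real matrix of rank d with K Kᵀ = W. Then the d×d matrix C_W = (Kᵀ C⁺ K)^{−1} is well defined (Kᵀ C⁺ K is positive definite), and for every nonzero vector q in the column space of W, the weighted variance (qᵀ W⁺ q)^{−1} · (qᵀ C⁺ q) is a convex combination of the reciprocals of the eigenvalues of C_W; that is, there exist nonnegative reals g_1, …, g_d with g_1 + … + g_d = 1 such that (qᵀ W⁺ q)^{−1} · (qᵀ C⁺ q) = Σ_{i=1}^d g_i · λ_i(C_W)^{−1}, where λ_1(C_W), …, λ_d(C_W) are the eigenvalues of C_W. -/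

import Mathlib

open Matrix

/-- The column space of a real matrix. -/
def colSpace {m n : ℕ} (A : Matrix (Fin m) (Fin n) ℝ) : Submodule ℝ (Fin m → ℝ) :=
  LinearMap.range A.mulVecLin

/-- `B` is the Moore–Penrose pseudoinverse of `A`. -/
def IsMPInv {m n : ℕ} (A : Matrix (Fin m) (Fin n) ℝ) (B : Matrix (Fin n) (Fin m) ℝ) : Prop :=
  A * B * A = A ∧ B * A * B = B ∧ (A * B)ᵀ = A * B ∧ (B * A)ᵀ = B * A

private lemma realCT {m n : ℕ} (A : Matrix (Fin m) (Fin n) ℝ) : Aᴴ = Aᵀ := by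
  ext i j; simp [conjTranspose_apply]

private lemma helperDP {a b : ℕ} (M : Matrix (Fin a) (Fin b) ℝ) (N : Matrix (Fin a) (Fin a) ℝ)
    (x y : Fin b → ℝ) :
    (M *ᵥ x) ⬝ᵥ (N *ᵥ (M *ᵥ y)) = x ⬝ᵥ ((Mᵀ * N * M) *ᵥ y) := by
  simp [dotProduct_mulVec, ← vecMul_vecMul, vecMul_transpose]

private lemma injOfRank {a b : ℕ} (M : Matrix (Fin a) (Fin b) ℝ) (h : M.rank = b) :
    ∀ z, M *ᵥ z = 0 → z = 0 := by
  have h2 := M.mulVecLin.finrank_range_add_finrank_ker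
  rw [Matrix.rank] at h
  rw [h, Module.finrank_pi, Fintype.card_fin] at h2
  have h3 : Module.finrank ℝ (LinearMap.ker M.mulVecLin) = 0 := by omega
  rw [Submodule.finrank_eq_zero] at h3
  intro z hz
  have : z ∈ LinearMap.ker M.mulVecLin := hz
  simpa [h3] using this

theorem stmt2 (v d : ℕ) (C W : Matrix (Fin v) (Fin v) ℝ) (hC : C.PosSemidef) (hW : W.PosSemidef)
    (hWrank : W.rank = d) (hcol : colSpace W ≤ colSpace C)
    (K : Matrix (Fin v) (Fin d) ℝ) (hKrank : K.rank = d) (hKW : K * Kᵀ = W)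
    (Cp : Matrix (Fin v) (Fin v) ℝ) (hCp : IsMPInv C Cp)
    (Wp : Matrix (Fin v) (Fin v) ℝ) (hWp : IsMPInv W Wp) :
    ∃ hPD : (Kᵀ * Cp * K).PosDef,
      ∀ q : Fin v → ℝ, q ∈ colSpace W → q ≠ 0 →
        ∃ g : Fin d → ℝ, (∀ i, 0 ≤ g i) ∧ (∑ i, g i = 1) ∧
          (q ⬝ᵥ Wp *ᵥ q)⁻¹ * (q ⬝ᵥ Cp *ᵥ q) =
            ∑ i, g i * ((Matrix.IsHermitian.inv hPD.1).eigenvalues i)⁻¹ := by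
  have hKinj := injOfRank K hKrank
  have hstar : ∀ {k : ℕ} (z : Fin k → ℝ), star z = z := fun z => funext fun i => star_trivial _
  have hdp : ∀ {k : ℕ} (z : Fin k → ℝ), 0 ≤ z ⬝ᵥ z := fun z =>
    Finset.sum_nonneg fun i _ => mul_self_nonneg _
  -- the Gram matrix G = Kᵀ K is positive definite, hence invertible
  set G : Matrix (Fin d) (Fin d) ℝ := Kᵀ * K with hGdef
  have hG : G.PosDef := by
    refine Matrix.posDef_iff_dotProduct_mulVec.mpr ⟨?_, ?_⟩
    · have := Matrix.isHermitian_conjTranspose_mul_self K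
      rwa [realCT] at this
    · intro z hz
      have key := (helperDP K (1 : Matrix (Fin v) (Fin v) ℝ) z z).symm
      rw [Matrix.mul_one] at key
      rw [hstar, hGdef, key, one_mulVec]
      have hne : K *ᵥ z ≠ 0 := fun h => hz (hKinj z h)
      have := dotProduct_self_eq_zero (v := K *ᵥ z)
      rcases lt_or_eq_of_le (hdp (K *ᵥ z)) with h | h
      · exact h
      · exact absurd (this.mp h.symm) hne
  have hGd : IsUnit G.det := (Matrix.isUnit_iff_isUnit_det G).mp hG.isUnit
  have hGinv1 : G⁻¹ * G = 1 := Matrix.nonsing_inv_mul G hGd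
  have hGinv2 : G * G⁻¹ = 1 := Matrix.mul_nonsing_inv G hGd
  -- Kᵀ Wp K = 1
  have hKWp1 : Kᵀ * Wp * K = 1 := by
    have e1 : G * (Kᵀ * Wp * K) * G = G * G := by
      have h := congrArg (fun X => Kᵀ * X * K) hWp.1
      simp only [← hKW] at h
      simpa [hGdef, Matrix.mul_assoc] using h
    calc Kᵀ * Wp * K = (G⁻¹ * G) * (Kᵀ * Wp * K) * (G * G⁻¹) := by
          rw [hGinv1, hGinv2, one_mul, mul_one]
      _ = G⁻¹ * (G * (Kᵀ * Wp * K) * G) * G⁻¹ := by simp only [Matrix.mul_assoc]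
      _ = G⁻¹ * (G * G) * G⁻¹ := by rw [e1]
      _ = (G⁻¹ * G) * (G * G⁻¹) := by simp only [Matrix.mul_assoc]
      _ = 1 := by rw [hGinv1, hGinv2, one_mul]
  -- columns of K lie in the column space of C
  have hKcol : ∀ z : Fin d → ℝ, K *ᵥ z ∈ colSpace C := by
    intro z
    have hKG : K * G = W * K := by rw [← hKW, hGdef, Matrix.mul_assoc]
    have hKfact : K = W * (K * G⁻¹) := by
      calc K = K * G * G⁻¹ := by rw [Matrix.mul_assoc, hGinv2, Matrix.mul_one]
        _ = W * K * G⁻¹ := by rw [hKG]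
        _ = W * (K * G⁻¹) := by rw [Matrix.mul_assoc]
    apply hcol
    refine LinearMap.mem_range.mpr ⟨(K * G⁻¹) *ᵥ z, ?_⟩
    rw [mulVecLin_apply, mulVec_mulVec, ← hKfact]
  -- write K = C * M
  have hcols : ∀ i : Fin d, ∃ z, C *ᵥ z = K *ᵥ Pi.single i 1 := by
    intro i
    obtain ⟨z, hz⟩ := LinearMap.mem_range.mp (hKcol (Pi.single i 1))
    exact ⟨z, by rwa [mulVecLin_apply] at hz⟩
  choose m hm using hcols
  set M : Matrix (Fin v) (Fin d) ℝ := Matrix.of fun r i => m i r with hMdef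
  have hCM : C * M = K := by
    ext r i
    have h := congrFun (hm i) r
    simp only [Matrix.mulVec, dotProduct, Pi.single_apply, mul_ite, mul_one, mul_zero,
      Finset.sum_ite_eq', Finset.mem_univ, if_true] at h
    simpa [Matrix.mul_apply, hMdef] using h
  have hCsymm : Cᵀ = C := by rw [← realCT]; exact hC.1
  have hAeq : Kᵀ * Cp * K = Mᵀ * C * M := by
    rw [← hCM, transpose_mul, hCsymm]
    simp only [Matrix.mul_assoc]
    congr 1
    rw [← Matrix.mul_assoc, ← Matrix.mul_assoc, hCp.1]
  -- positive definiteness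
  have hPD : (Kᵀ * Cp * K).PosDef := by
    rw [hAeq]
    refine Matrix.posDef_iff_dotProduct_mulVec.mpr ⟨?_, ?_⟩
    · have := Matrix.isHermitian_conjTranspose_mul_mul M hC.1
      rwa [realCT] at this
    · intro z hz
      have key : z ⬝ᵥ ((Mᵀ * C * M) *ᵥ z) = (M *ᵥ z) ⬝ᵥ (C *ᵥ (M *ᵥ z)) :=
        (helperDP M C z z).symm
      rw [hstar, key]
      have hnn := hC.dotProduct_mulVec_nonneg (M *ᵥ z)
      rw [hstar] at hnn
      rcases lt_or_eq_of_le hnn with h | h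
      · exact h
      · exfalso
        have hz0 : C *ᵥ (M *ᵥ z) = 0 := by
          have := (hC.dotProduct_mulVec_zero_iff (M *ᵥ z)).mp
          rw [hstar] at this
          exact this h.symm
        apply hz
        apply hKinj
        rw [← hCM, ← mulVec_mulVec]
        exact hz0
  refine ⟨hPD, ?_⟩
  intro q hq hq0
  obtain ⟨y, hy⟩ := LinearMap.mem_range.mp hq
  rw [mulVecLin_apply] at hy
  set x : Fin d → ℝ := Kᵀ *ᵥ y with hxdef
  have hKx : K *ᵥ x = q := by rw [hxdef, mulVec_mulVec, hKW, hy]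
  have hx0 : x ≠ 0 := fun h => hq0 (by rw [← hKx, h, mulVec_zero])
  have hWq : q ⬝ᵥ Wp *ᵥ q = x ⬝ᵥ x := by
    rw [← hKx, helperDP, hKWp1, one_mulVec]
  have hCq : q ⬝ᵥ Cp *ᵥ q = x ⬝ᵥ ((Kᵀ * Cp * K) *ᵥ x) := by
    rw [← hKx, helperDP]
  -- spectral analysis of A⁻¹
  have hB : ((Kᵀ * Cp * K)⁻¹).IsHermitian := Matrix.IsHermitian.inv hPD.1
  have hBpd : ((Kᵀ * Cp * K)⁻¹).PosDef := hPD.inv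
  set μ : Fin d → ℝ := hB.eigenvalues with hμdef
  have hμpos : ∀ i, 0 < μ i := fun i => hBpd.eigenvalues_pos i
  set U : Matrix (Fin d) (Fin d) ℝ := (hB.eigenvectorUnitary : Matrix (Fin d) (Fin d) ℝ)
    with hUdef
  have hstarU : star U = Uᵀ := by rw [star_eq_conjTranspose, realCT]
  have hU1 : U * Uᵀ = 1 := by
    rw [← hstarU]; exact mem_unitaryGroup_iff.mp hB.eigenvectorUnitary.2
  have hU2 : Uᵀ * U = 1 := by
    rw [← hstarU]; exact mem_unitaryGroup_iff'.mp hB.eigenvectorUnitary.2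
  have hspec : (Kᵀ * Cp * K)⁻¹ = U * diagonal μ * Uᵀ := by
    have := hB.spectral_theorem
    rwa [Unitary.conjStarAlgAut_apply, ← hUdef, hstarU] at this
  set D' : Matrix (Fin d) (Fin d) ℝ := diagonal (fun i => (μ i)⁻¹) with hD'def
  have hDD' : diagonal μ * D' = 1 := by
    rw [hD'def, diagonal_mul_diagonal]
    have : (fun i => μ i * (μ i)⁻¹) = fun _ => (1:ℝ) :=
      funext fun i => mul_inv_cancel₀ (hμpos i).ne'
    rw [this, diagonal_one]
  have hAinv : (Kᵀ * Cp * K) * (Kᵀ * Cp * K)⁻¹ = 1 :=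
    Matrix.mul_nonsing_inv _ ((Matrix.isUnit_iff_isUnit_det _).mp hPD.isUnit)
  have hB1 : (Kᵀ * Cp * K)⁻¹ * (U * D' * Uᵀ) = 1 := by
    rw [hspec]
    simp only [Matrix.mul_assoc]
    rw [show Uᵀ * (U * (D' * Uᵀ)) = D' * Uᵀ by rw [← Matrix.mul_assoc, hU2, one_mul]]
    rw [show diagonal μ * (D' * Uᵀ) = Uᵀ by rw [← Matrix.mul_assoc, hDD', one_mul]]
    exact hU1
  have hAeq2 : Kᵀ * Cp * K = U * D' * Uᵀ := by
    calc Kᵀ * Cp * K = (Kᵀ * Cp * K) * ((Kᵀ * Cp * K)⁻¹ * (U * D' * Uᵀ)) := by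
          rw [hB1, mul_one]
      _ = ((Kᵀ * Cp * K) * (Kᵀ * Cp * K)⁻¹) * (U * D' * Uᵀ) := by
          simp only [Matrix.mul_assoc]
      _ = U * D' * Uᵀ := by rw [hAinv, one_mul]
  set w : Fin d → ℝ := Uᵀ *ᵥ x with hwdef
  have hxA : x ⬝ᵥ ((Kᵀ * Cp * K) *ᵥ x) = ∑ i, (μ i)⁻¹ * (w i)^2 := by
    rw [hAeq2]
    have h := helperDP Uᵀ D' x x
    rw [transpose_transpose] at h
    rw [← h, hwdef]
    simp only [hD'def, dotProduct, mulVec_diagonal]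
    exact Finset.sum_congr rfl fun i _ => by ring
  have hxx : x ⬝ᵥ x = ∑ i, (w i)^2 := by
    have h := helperDP Uᵀ 1 x x
    rw [transpose_transpose, mul_one, hU1] at h
    rw [← hwdef] at h
    rw [show x ⬝ᵥ x = x ⬝ᵥ ((1 : Matrix (Fin d) (Fin d) ℝ) *ᵥ x) by rw [one_mulVec], ← h,
      one_mulVec]
    simp only [dotProduct]
    exact Finset.sum_congr rfl fun i _ => by ring
  have hS : 0 < x ⬝ᵥ x := by
    rcases lt_or_eq_of_le (hdp x) with h | h
    · exact h
    · exact absurd (dotProduct_self_eq_zero.mp h.symm) hx0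
  refine ⟨fun i => (w i)^2 / (x ⬝ᵥ x), fun i => div_nonneg (sq_nonneg _) hS.le, ?_, ?_⟩
  · rw [← Finset.sum_div, ← hxx, div_self hS.ne']
  · rw [hWq, hCq, hxA, Finset.mul_sum]
    exact Finset.sum_congr rfl fun i _ => by ring
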